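/- Let L be a system of m linearly independent linear forms in k variables over F_q such that the minimal support size s(L) of a nonzero vector in the row space of L is odd. Then L is not Sidorenko: there exist n and a set A ⊆ F_q^n with |sol(L,A)| < |A|^k / q^{nm}. In fact, for all sufficiently large n, the set A = F_q^n \ {0} witnesses this. -/

import Mathlib

open scoped BigOperators Classical

/-- The number of nonzero coordinates (support size) of a vector. -/
noncomputable def suppCard {F : Type*} [Field F] {k : ℕ} (v : Fin k → F) : ℕ :=
  (Finset.univ.filter fun j => v j ≠ 0).card

/-- `s(L)`: the minimal support size of a nonzero vector in the row space of `L`,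
i.e. the minimal length of an equation induced by `L`. -/
noncomputable def minLen {F : Type*} [Field F] {m k : ℕ} (L : Matrix (Fin m) (Fin k) F) : ℕ :=
  sInf {c | ∃ v ∈ Submodule.span F (Set.range fun i => L i), v ≠ 0 ∧ suppCard v = c}

/-- The rank of the matrix obtained from `L` by deleting the columns indexed by `B`. -/
noncomputable def delRank {F : Type*} [Field F] [Fintype F] {m k : ℕ}
    (L : Matrix (Fin m) (Fin k) F) (B : Finset (Fin k)) : ℕ :=
  (L.submatrix id (fun j : {j : Fin k // j ∉ B} => (j : Fin k))).rank

/-- `B` is good for `L`: writing `|B| = s(L) + t` with `t ≥ 0`, deleting the columns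
indexed by `B` decreases the rank by exactly `t + 1`. -/
noncomputable def Good {F : Type*} [Field F] [Fintype F] {m k : ℕ}
    (L : Matrix (Fin m) (Fin k) F) (B : Finset (Fin k)) : Prop :=
  minLen L ≤ B.card ∧ delRank L B + (B.card - minLen L + 1) = m

/-! ### Auxiliary combinatorial lemmas -/

section Comb

open Finset

lemma aux_sup_mem_of_unionClosed {α : Type*} [DecidableEq α] (G : Finset (Finset α))
    (hu : ∀ U₁ ∈ G, ∀ U₂ ∈ G, U₁ ∪ U₂ ∈ G) :
    ∀ G' : Finset (Finset α), G'.Nonempty → G' ⊆ G → G'.sup id ∈ G := by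
  intro G' hne
  induction hne using Finset.Nonempty.cons_induction with
  | singleton a => intro h; simpa using h (mem_singleton_self a)
  | cons a s ha hs ih =>
      intro hsub
      have haG : a ∈ G := hsub (mem_cons_self a s)
      have hsG : s ⊆ G := fun x hx => hsub (mem_cons.2 (Or.inr hx))
      have := ih hsG
      rw [Finset.sup_cons]
      exact hu a haG _ this

lemma aux_comb_base0 {α : Type*} [DecidableEq α] (G : Finset (Finset α))
    (hdown : ∀ U ∈ G, ∀ V ⊆ U, V ∈ G)
    (hu : ∀ U₁ ∈ G, ∀ U₂ ∈ G, U₁ ∪ U₂ ∈ G) :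
    0 ≤ ∑ U ∈ G, (-1 : ℤ) ^ U.card := by
  rcases G.eq_empty_or_nonempty with rfl | hne
  · simp
  · have hM : G.sup id ∈ G := aux_sup_mem_of_unionClosed G hu G hne (subset_refl G)
    have hG : G = (G.sup id).powerset := by
      ext V
      simp only [mem_powerset]
      constructor
      · intro hV; exact le_sup (f := id) hV
      · intro hV; exact hdown _ hM _ hV
    rw [hG, Finset.sum_powerset_neg_one_pow_card]
    split <;> norm_num

lemma aux_comb_main {α : Type*} [DecidableEq α] : ∀ s : ℕ, 1 ≤ s → ∀ G : Finset (Finset α),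
    (∀ U ∈ G, ∀ V ⊆ U, s ≤ V.card → V ∈ G) →
    (∀ U₁ ∈ G, ∀ U₂ ∈ G, s ≤ (U₁ ∩ U₂).card + 1 → U₁ ∪ U₂ ∈ G) →
    (∀ U ∈ G, s ≤ U.card) → G.Nonempty →
    1 ≤ (-1 : ℤ) ^ s * ∑ U ∈ G, (-1 : ℤ) ^ U.card := by
  intro s
  induction s with
  | zero => omega
  | succ s' ihs =>
    intro _ G
    induction G using Finset.strongInduction with
    | _ G ihG =>
      intro hdown hu hmin hne
      by_cases hx : ∃ x, (∃ U ∈ G, x ∈ U) ∧ (∃ V ∈ G, x ∉ V)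
      · obtain ⟨x, ⟨U, hUG, hxU⟩, ⟨V, hVG, hxV⟩⟩ := hx
        set G₀ := G.filter (fun W => x ∉ W) with hG₀def
        have hG₀sub : G₀ ⊆ G := filter_subset _ _
        have hG₀ssub : G₀ ⊂ G := by
          refine Finset.ssubset_iff_of_subset hG₀sub |>.2 ⟨U, hUG, ?_⟩
          simp [hG₀def, hxU]
        have hVG₀ : V ∈ G₀ := by simp [hG₀def, hVG, hxV]
        have h₀ : 1 ≤ (-1 : ℤ) ^ (s' + 1) * ∑ W ∈ G₀, (-1 : ℤ) ^ W.card := by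
          refine ihG G₀ hG₀ssub ?_ ?_ ?_ ⟨V, hVG₀⟩
          · intro U hU V hVU hcard
            have hUG' := hG₀sub hU
            have hxU' : x ∉ U := (mem_filter.1 hU).2
            exact mem_filter.2 ⟨hdown U hUG' V hVU hcard, fun hxV' => hxU' (hVU hxV')⟩
          · intro U₁ h₁ U₂ h₂ hcard
            refine mem_filter.2 ⟨hu U₁ (hG₀sub h₁) U₂ (hG₀sub h₂) hcard, ?_⟩
            simp only [mem_union]
            push_neg
            exact ⟨(mem_filter.1 h₁).2, (mem_filter.1 h₂).2⟩
          · intro U hU; exact hmin U (hG₀sub hU)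
        set H := (G.filter (fun W => x ∈ W)).image (fun W => W.erase x) with hHdef
        have hmemH : ∀ W ∈ H, insert x W ∈ G ∧ x ∉ W := by
          intro W hW
          obtain ⟨U', hU', rfl⟩ := mem_image.1 hW
          have h1 := mem_filter.1 hU'
          constructor
          · rw [Finset.insert_erase h1.2]; exact h1.1
          · exact notMem_erase x U'
        have hinsH : ∀ W, insert x W ∈ G → x ∉ W → W ∈ H := by
          intro W hWG hxW
          refine mem_image.2 ⟨insert x W, mem_filter.2 ⟨hWG, mem_insert_self x W⟩, ?_⟩
          exact Finset.erase_insert hxW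
        have hinj : ∀ a ∈ G.filter (fun W => x ∈ W), ∀ b ∈ G.filter (fun W => x ∈ W),
            a.erase x = b.erase x → a = b := by
          intro a ha b hb hab
          have hxa := (mem_filter.1 ha).2
          have hxb := (mem_filter.1 hb).2
          rw [← Finset.insert_erase hxa, ← Finset.insert_erase hxb, hab]
        have hsum : ∑ W ∈ G.filter (fun W => x ∈ W), (-1 : ℤ) ^ W.card
            = - ∑ W ∈ H, (-1 : ℤ) ^ W.card := by
          rw [hHdef, Finset.sum_image hinj, ← Finset.sum_neg_distrib]
          refine Finset.sum_congr rfl ?_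
          intro W hW
          have hxW := (mem_filter.1 hW).2
          have : (W.erase x).card + 1 = W.card := Finset.card_erase_add_one hxW
          rw [← this, pow_succ]
          ring
        have hHne : H.Nonempty := ⟨U.erase x, mem_image.2 ⟨U, mem_filter.2 ⟨hUG, hxU⟩, rfl⟩⟩
        have hHnonneg : 0 ≤ (-1 : ℤ) ^ s' * ∑ W ∈ H, (-1 : ℤ) ^ W.card := by
          rcases Nat.eq_zero_or_pos s' with hs0 | hs1
          · subst hs0
            simpa using aux_comb_base0 H
              (by
                intro W hW V hVW
                obtain ⟨hWG, hxW⟩ := hmemH W hW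
                have hxV' : x ∉ V := fun h => hxW (hVW h)
                refine hinsH V ?_ hxV'
                refine hdown _ hWG _ ?_ (by simp)
                exact Finset.insert_subset_insert x hVW
                )
              (by
                intro W₁ h₁ W₂ h₂
                obtain ⟨hW₁G, hxW₁⟩ := hmemH W₁ h₁
                obtain ⟨hW₂G, hxW₂⟩ := hmemH W₂ h₂
                have hun : insert x W₁ ∪ insert x W₂ ∈ G := by
                  refine hu _ hW₁G _ hW₂G ?_
                  have : x ∈ insert x W₁ ∩ insert x W₂ := by
                    simp [mem_inter]
                  have := Finset.card_pos.2 ⟨x, this⟩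
                  omega
                have : insert x W₁ ∪ insert x W₂ = insert x (W₁ ∪ W₂) := by
                  ext y; simp only [mem_union, mem_insert]; tauto
                rw [this] at hun
                exact hinsH _ hun (by simp [mem_union, hxW₁, hxW₂])
                )
          · have := ihs hs1 H
              (by
                intro W hW V hVW hc
                obtain ⟨hWG, hxW⟩ := hmemH W hW
                have hxV' : x ∉ V := fun h => hxW (hVW h)
                refine hinsH V ?_ hxV'
                refine hdown _ hWG _ (Finset.insert_subset_insert x hVW) ?_
                rw [Finset.card_insert_of_notMem hxV']
                omega)
              (by
                intro W₁ h₁ W₂ h₂ hc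
                obtain ⟨hW₁G, hxW₁⟩ := hmemH W₁ h₁
                obtain ⟨hW₂G, hxW₂⟩ := hmemH W₂ h₂
                have hins : insert x W₁ ∩ insert x W₂ = insert x (W₁ ∩ W₂) := by
                  ext y; simp only [mem_inter, mem_insert]; tauto
                have hun : insert x W₁ ∪ insert x W₂ ∈ G := by
                  refine hu _ hW₁G _ hW₂G ?_
                  rw [hins, Finset.card_insert_of_notMem (by simp [mem_inter, hxW₁])]
                  omega
                have : insert x W₁ ∪ insert x W₂ = insert x (W₁ ∪ W₂) := by
                  ext y; simp only [mem_union, mem_insert]; tauto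
                rw [this] at hun
                exact hinsH _ hun (by simp [mem_union, hxW₁, hxW₂]))
              (by
                intro W hW
                obtain ⟨hWG, hxW⟩ := hmemH W hW
                have := hmin _ hWG
                rw [Finset.card_insert_of_notMem hxW] at this
                omega)
              hHne
            omega
        have hsplit : ∑ W ∈ G, (-1 : ℤ) ^ W.card
            = ∑ W ∈ G.filter (fun W => x ∈ W), (-1 : ℤ) ^ W.card
              + ∑ W ∈ G₀, (-1 : ℤ) ^ W.card := by
          rw [hG₀def]
          exact (Finset.sum_filter_add_sum_filter_not G _ _).symm
        rw [hsplit, hsum]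
        have hpow : (-1 : ℤ) ^ (s' + 1) * (- ∑ W ∈ H, (-1 : ℤ) ^ W.card)
            = (-1 : ℤ) ^ s' * ∑ W ∈ H, (-1 : ℤ) ^ W.card := by
          rw [pow_succ]; ring
        calc (1:ℤ) ≤ (-1 : ℤ) ^ (s' + 1) * ∑ W ∈ G₀, (-1 : ℤ) ^ W.card +
            (-1 : ℤ) ^ s' * ∑ W ∈ H, (-1 : ℤ) ^ W.card := by omega
          _ = _ := by rw [← hpow]; ring
      · push_neg at hx
        obtain ⟨U₀, hU₀⟩ := hne
        have hall : ∀ W ∈ G, W = U₀ := by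
          intro W hW
          apply Finset.Subset.antisymm
          · intro y hy; exact hx y ⟨W, hW, hy⟩ U₀ hU₀
          · intro y hy; exact hx y ⟨U₀, hU₀, hy⟩ W hW
        have hGsing : G = {U₀} := by
          apply Finset.Subset.antisymm
          · intro W hW; rw [mem_singleton]; exact hall W hW
          · intro W hW; rw [mem_singleton] at hW; subst hW; exact hU₀
        have hcard : U₀.card = s' + 1 := by
          have h1 := hmin U₀ hU₀
          by_contra hne'
          have hlt : s' + 1 < U₀.card := by omega
          obtain ⟨V, hVsub, hVcard⟩ := Finset.exists_subset_card_eq (le_of_lt hlt)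
          have := hall V (hdown U₀ hU₀ V hVsub (by omega))
          subst this
          omega
        rw [hGsing, Finset.sum_singleton, hcard, ← pow_add]
        have hev : Even ((s' + 1) + (s' + 1)) := ⟨s' + 1, rfl⟩
        rw [hev.neg_one_pow]

end Comb

/-! ### Linear algebra lemmas -/

section Lin
variable {F : Type*} [Field F] [Fintype F] {m k : ℕ} (L : Matrix (Fin m) (Fin k) F)

open Module Submodule Matrix
set_option linter.unusedSectionVars false

/-- row space -/
noncomputable def RS : Submodule F (Fin k → F) := Submodule.span F (Set.range fun i => L i)

/-- restriction to coordinates outside `B` -/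
noncomputable def evB (B : Finset (Fin k)) : (Fin k → F) →ₗ[F] ({j : Fin k // j ∉ B} → F) :=
  LinearMap.pi (fun j => LinearMap.proj j.1)

lemma mem_ker_evB {B : Finset (Fin k)} {v : Fin k → F} :
    v ∈ LinearMap.ker (evB (F := F) (k := k) B) ↔ ∀ j ∉ B, v j = 0 := by
  constructor
  · intro h j hj
    have := congrFun (LinearMap.mem_ker.1 h) ⟨j, hj⟩
    simpa [evB] using this
  · intro h
    rw [LinearMap.mem_ker]
    funext j
    simpa [evB] using h j.1 j.2

/-- the dimension of the space of row-space vectors supported inside `B` -/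
noncomputable def DD (B : Finset (Fin k)) : ℕ :=
  Module.finrank F ↥(RS L ⊓ LinearMap.ker (evB B))

lemma finrank_RS : Module.finrank F ↥(RS L) = L.rank := by
  have h : RS L = LinearMap.range (Matrix.mulVecLin Lᵀ) := by
    rw [Matrix.range_mulVecLin]; rfl
  rw [h]
  have := Matrix.rank_transpose L
  rw [← this]
  rfl

lemma delRank_eq_finrank_map (B : Finset (Fin k)) :
    delRank L B = Module.finrank F ↥((RS L).map (evB B)) := by
  set LB := L.submatrix id (fun j : {j : Fin k // j ∉ B} => (j : Fin k)) with hLB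
  have h1 : delRank L B = (LBᵀ).rank := (Matrix.rank_transpose LB).symm
  have h2 : LinearMap.range (Matrix.mulVecLin LBᵀ) = (RS L).map (evB B) := by
    rw [Matrix.range_mulVecLin]
    change Submodule.span F (Set.range LB) = _
    have : Set.range LB = (evB (F := F) B) '' Set.range (fun i => L i) := by
      ext w
      constructor
      · rintro ⟨i, rfl⟩
        exact ⟨L i, ⟨i, rfl⟩, rfl⟩
      · rintro ⟨v, ⟨i, rfl⟩, rfl⟩
        exact ⟨i, rfl⟩
    rw [this, ← Submodule.map_span]
    rfl
  rw [h1, Matrix.rank, h2]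

lemma delRank_add_DD (B : Finset (Fin k)) :
    delRank L B + DD L B = Module.finrank F ↥(RS L) := by
  have hrn := LinearMap.finrank_range_add_finrank_ker ((evB (F := F) B).domRestrict (RS L))
  rw [LinearMap.range_domRestrict] at hrn
  have hker : LinearMap.ker ((evB (F := F) B).domRestrict (RS L))
      = Submodule.comap (RS L).subtype (RS L ⊓ LinearMap.ker (evB B)) := by
    rw [LinearMap.ker_domRestrict, Submodule.comap_inf, Submodule.comap_subtype_self]
    simp
  have heq : Module.finrank F ↥(LinearMap.ker ((evB (F := F) B).domRestrict (RS L)))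
      = DD L B := by
    rw [hker]
    exact (Submodule.comapSubtypeEquivOfLe inf_le_left).finrank_eq
  rw [heq] at hrn
  rw [delRank_eq_finrank_map]
  exact hrn

lemma minLen_le_suppCard {v : Fin k → F} (hv : v ∈ RS L) (hv0 : v ≠ 0) :
    minLen L ≤ suppCard v :=
  Nat.sInf_le ⟨v, hv, hv0, rfl⟩

lemma DD_L1 (B : Finset (Fin k)) (h : 1 ≤ DD L B) : minLen L ≤ B.card := by
  have hbot : RS L ⊓ LinearMap.ker (evB B) ≠ ⊥ := by
    intro hb
    rw [DD, hb] at h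
    simp at h
  obtain ⟨v, hv, hv0⟩ := Submodule.exists_mem_ne_zero_of_ne_bot hbot
  have h1 : minLen L ≤ suppCard v := minLen_le_suppCard L hv.1 hv0
  have h2 : suppCard v ≤ B.card := by
    apply Finset.card_le_card
    intro j hj
    rw [Finset.mem_filter] at hj
    by_contra hjB
    exact hj.2 ((mem_ker_evB).1 hv.2 j hjB)
  omega

lemma DD_L2 {C B : Finset (Fin k)} (hCB : C ⊆ B) : DD L B ≤ DD L C + (B \ C).card := by
  set VB := RS L ⊓ LinearMap.ker (evB (F := F) B) with hVB
  set g : ↥VB →ₗ[F] ({j : Fin k // j ∈ B \ C} → F) :=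
    (LinearMap.pi (fun j : {j : Fin k // j ∈ B \ C} => LinearMap.proj j.1)).domRestrict VB with hg
  have hrn := LinearMap.finrank_range_add_finrank_ker g
  have hrange : Module.finrank F ↥(LinearMap.range g) ≤ (B \ C).card := by
    calc Module.finrank F ↥(LinearMap.range g)
        ≤ Module.finrank F ({j : Fin k // j ∈ B \ C} → F) := Submodule.finrank_le _
      _ = (B \ C).card := by
          rw [Module.finrank_fintype_fun_eq_card]
          exact Fintype.card_coe _
  have hinj : Module.finrank F ↥(LinearMap.ker g)
      ≤ Module.finrank F ↥(RS L ⊓ LinearMap.ker (evB (F := F) C)) := by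
    set ι : ↥(LinearMap.ker g) →ₗ[F] (Fin k → F) := VB.subtype.comp (LinearMap.ker g).subtype
      with hι
    have hmem : ∀ x : ↥(LinearMap.ker g), ι x ∈ RS L ⊓ LinearMap.ker (evB (F := F) C) := by
      intro x
      refine ⟨x.1.2.1, (mem_ker_evB).2 ?_⟩
      intro j hjC
      by_cases hjB : j ∈ B
      · have hx : g x = 0 := x.2
        have h0 := congrFun (congrArg (fun (u : {j : Fin k // j ∈ B \ C} → F) => u) hx)
          ⟨j, Finset.mem_sdiff.2 ⟨hjB, hjC⟩⟩
        exact h0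
      · exact (mem_ker_evB).1 x.1.2.2 j hjB
    set ι' := LinearMap.codRestrict (RS L ⊓ LinearMap.ker (evB (F := F) C)) ι hmem
    have hinj' : Function.Injective ι' := by
      intro a b hab
      have h0 : ((ι' a : ↥(RS L ⊓ LinearMap.ker (evB (F := F) C))) : Fin k → F)
          = ((ι' b : ↥(RS L ⊓ LinearMap.ker (evB (F := F) C))) : Fin k → F) :=
        congrArg Subtype.val hab
      exact Subtype.ext (Subtype.ext h0)
    exact LinearMap.finrank_le_finrank_of_injective hinj'
  have hDB : DD L B = Module.finrank F ↥VB := rfl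
  have hDC : DD L C = Module.finrank F ↥(RS L ⊓ LinearMap.ker (evB (F := F) C)) := rfl
  omega

lemma ker_evB_mono {B B' : Finset (Fin k)} (h : B ⊆ B') :
    LinearMap.ker (evB (F := F) (k := k) B) ≤ LinearMap.ker (evB (F := F) (k := k) B') := by
  intro v hv
  rw [mem_ker_evB] at hv ⊢
  intro j hj
  exact hv j (fun hc => hj (h hc))

lemma DD_L3 (B₁ B₂ : Finset (Fin k)) :
    DD L B₁ + DD L B₂ ≤ DD L (B₁ ∪ B₂) + DD L (B₁ ∩ B₂) := by
  set V₁ := RS L ⊓ LinearMap.ker (evB (F := F) B₁)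
  set V₂ := RS L ⊓ LinearMap.ker (evB (F := F) B₂)
  have hsup : V₁ ⊔ V₂ ≤ RS L ⊓ LinearMap.ker (evB (F := F) (B₁ ∪ B₂)) := by
    apply sup_le
    · exact le_inf inf_le_left (le_trans inf_le_right (ker_evB_mono Finset.subset_union_left))
    · exact le_inf inf_le_left (le_trans inf_le_right (ker_evB_mono Finset.subset_union_right))
  have hinf : V₁ ⊓ V₂ ≤ RS L ⊓ LinearMap.ker (evB (F := F) (B₁ ∩ B₂)) := by
    refine le_inf (le_trans inf_le_left inf_le_left) ?_
    intro v hv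
    rw [mem_ker_evB]
    intro j hj
    have hj' : j ∉ B₁ ∨ j ∉ B₂ := by
      by_contra hc
      push_neg at hc
      exact hj (Finset.mem_inter.2 ⟨hc.1, hc.2⟩)
    rcases hj' with h1 | h1
    · exact (mem_ker_evB).1 hv.1.2 j h1
    · exact (mem_ker_evB).1 hv.2.2 j h1
  calc DD L B₁ + DD L B₂
      = Module.finrank F ↥(V₁ ⊔ V₂) + Module.finrank F ↥(V₁ ⊓ V₂) :=
        (Submodule.finrank_sup_add_finrank_inf_eq V₁ V₂).symm
    _ ≤ DD L (B₁ ∪ B₂) + DD L (B₁ ∩ B₂) :=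
        Nat.add_le_add (Submodule.finrank_mono hsup) (Submodule.finrank_mono hinf)

end Lin


/-! ### Counting lemmas -/

section Count
variable {F : Type*} [Field F] [Fintype F] {m k : ℕ} (L : Matrix (Fin m) (Fin k) F)

open Module Matrix
set_option linter.unusedSectionVars false

lemma aux_sum_compl (B : Finset (Fin k)) (h : Fin k → F) (hzero : ∀ j ∈ B, h j = 0) :
    ∑ j : {j : Fin k // j ∉ B}, h j.1 = ∑ j : Fin k, h j := by
  rw [← Finset.sum_subtype (Finset.univ \ B) (by simp) h]
  exact Finset.sum_subset (Finset.subset_univ _)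
    (fun x _ hx => hzero x (by simpa using hx))

/-- dimension of the kernel of the deleted system -/
noncomputable def dk (B : Finset (Fin k)) : ℕ :=
  Module.finrank F ↥(LinearMap.ker (Matrix.mulVecLin
    (L.submatrix id (fun j : {j : Fin k // j ∉ B} => (j : Fin k)))))

lemma delRank_add_dk (B : Finset (Fin k)) :
    delRank L B + dk L B = Fintype.card {j : Fin k // j ∉ B} := by
  have h := LinearMap.finrank_range_add_finrank_ker (Matrix.mulVecLin
    (L.submatrix id (fun j : {j : Fin k // j ∉ B} => (j : Fin k))))
  rw [Module.finrank_fintype_fun_eq_card] at h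
  simpa [delRank, Matrix.rank, dk] using h

lemma card_solB (n : ℕ) (B : Finset (Fin k)) :
    Nat.card {x : Fin k → (Fin n → F) //
      (∀ i : Fin m, ∑ j : Fin k, L i j • x j = 0) ∧ ∀ j ∈ B, x j = 0}
    = Fintype.card F ^ (n * dk L B) := by
  classical
  set LB := L.submatrix id (fun j : {j : Fin k // j ∉ B} => (j : Fin k)) with hLB
  set K := LinearMap.ker (Matrix.mulVecLin LB) with hK
  have e : {x : Fin k → (Fin n → F) //
      (∀ i : Fin m, ∑ j : Fin k, L i j • x j = 0) ∧ ∀ j ∈ B, x j = 0}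
      ≃ (Fin n → ↥K) := by
    refine
      { toFun := fun x c => ⟨fun j => x.1 j.1 c, ?_⟩
        invFun := fun y => ⟨fun j c => if h : j ∈ B then 0 else (y c).1 ⟨j, h⟩, ?_, ?_⟩
        left_inv := ?_
        right_inv := ?_ }
    · -- membership in the kernel
      rw [hK, LinearMap.mem_ker]
      funext i
      have h1 := aux_sum_compl B (fun j => L i j * x.1 j c)
        (fun j hj => by show L i j * x.1 j c = 0; rw [x.2.2 j hj]; simp)
      have h2 : ∑ j : Fin k, L i j * x.1 j c = 0 := by
        have := congrFun (x.2.1 i) c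
        rw [Finset.sum_apply] at this
        simpa [Pi.smul_apply, smul_eq_mul] using this
      show ∑ j : {j : Fin k // j ∉ B}, L i j.1 * x.1 j.1 c = 0
      exact h1.trans h2
    · -- system holds
      intro i
      funext c
      rw [Finset.sum_apply]
      show ∑ j : Fin k, L i j * (if h : j ∈ B then (0 : F) else (y c).1 ⟨j, h⟩) = 0
      have h2 := aux_sum_compl B
        (fun j => L i j * (if h : j ∈ B then (0 : F) else (y c).1 ⟨j, h⟩))
        (fun j hj => by show L i j * (if h : j ∈ B then (0 : F) else (y c).1 ⟨j, h⟩) = 0; rw [dif_pos hj, mul_zero])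
      rw [← h2]
      have h3 : ∀ j : {j : Fin k // j ∉ B},
          L i j.1 * (if h : j.1 ∈ B then (0 : F) else (y c).1 ⟨j.1, h⟩)
          = LB i j * (y c).1 j := by
        intro j
        rw [dif_neg j.2]
        rfl
      rw [Finset.sum_congr rfl (fun j _ => h3 j)]
      have h4 : LB.mulVecLin ((y c) : {j : Fin k // j ∉ B} → F) = 0 := (y c).2
      exact congrFun h4 i
    · -- zero on B
      intro j hj
      funext c
      show (if h : j ∈ B then (0 : F) else (y c).1 ⟨j, h⟩) = 0
      rw [dif_pos hj]
    · -- left inverse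
      intro x
      apply Subtype.ext
      funext j c
      show (if h : j ∈ B then (0 : F) else x.1 j c) = x.1 j c
      by_cases hj : j ∈ B
      · rw [dif_pos hj]
        exact (congrFun (x.2.2 j hj) c).symm
      · rw [dif_neg hj]
    · -- right inverse
      intro y
      funext c
      apply Subtype.ext
      funext j
      show (if h : (j : Fin k) ∈ B then (0 : F) else (y c).1 ⟨j.1, h⟩) = (y c).1 j
      rw [dif_neg j.2]
  rw [Nat.card_congr e, Nat.card_pi]
  have hcardK : Nat.card ↥K = Fintype.card F ^ (dk L B) := by
    have : Fintype.card ↥K = Fintype.card F ^ (Module.finrank F ↥K) :=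
      card_eq_pow_finrank (K := F) (V := ↥K)
    rw [Nat.card_eq_fintype_card, this]
    rfl
  rw [Finset.prod_const, hcardK, Finset.card_univ, Fintype.card_fin, ← pow_mul, mul_comm (dk L B) n]

lemma aux_incl_excl (n : ℕ) :
    ((Nat.card {x : Fin k → (Fin n → F) //
        (∀ j, x j ≠ 0) ∧ ∀ i : Fin m, ∑ j : Fin k, L i j • x j = 0}) : ℤ)
    = ∑ B ∈ (Finset.univ : Finset (Fin k)).powerset, (-1 : ℤ) ^ B.card *
        ((Nat.card {x : Fin k → (Fin n → F) //
          (∀ i : Fin m, ∑ j : Fin k, L i j • x j = 0) ∧ ∀ j ∈ B, x j = 0}) : ℤ) := by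
  classical
  set P : (Fin k → (Fin n → F)) → Prop := fun x => ∀ i : Fin m, ∑ j : Fin k, L i j • x j = 0
    with hP
  have step1 : ((Nat.card {x : Fin k → (Fin n → F) // (∀ j, x j ≠ 0) ∧ P x}) : ℤ)
      = ∑ x ∈ Finset.univ.filter P, (if (∀ j, x j ≠ 0) then (1 : ℤ) else 0) := by
    rw [Finset.sum_boole, Nat.card_eq_fintype_card, Fintype.card_subtype, Finset.filter_filter]
    norm_num
    congr 1
    ext x
    simp [and_comm]
  rw [step1]
  have step3 : ∀ x : Fin k → (Fin n → F), (if (∀ j, x j ≠ 0) then (1 : ℤ) else 0)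
      = ∏ j : Fin k, (-(if x j = 0 then (1 : ℤ) else 0) + 1) := by
    intro x
    by_cases hall : ∀ j, x j ≠ 0
    · rw [if_pos hall]
      rw [Finset.prod_eq_one]
      intro j _
      rw [if_neg (hall j)]
      ring
    · rw [if_neg hall]
      push_neg at hall
      obtain ⟨j0, hj0⟩ := hall
      refine (Finset.prod_eq_zero (Finset.mem_univ j0) ?_).symm
      rw [if_pos hj0]
      ring
  have step4 : ∀ x : Fin k → (Fin n → F),
      ∏ j : Fin k, (-(if x j = 0 then (1 : ℤ) else 0) + 1)
      = ∑ B ∈ (Finset.univ : Finset (Fin k)).powerset,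
          (-1 : ℤ) ^ B.card * (if (∀ j ∈ B, x j = 0) then (1 : ℤ) else 0) := by
    intro x
    rw [Finset.prod_add]
    refine Finset.sum_congr rfl (fun B _ => ?_)
    rw [Finset.prod_const_one, mul_one]
    have : ∀ j ∈ B, -(if x j = 0 then (1 : ℤ) else 0)
        = (-1) * (if x j = 0 then (1 : ℤ) else 0) := by
      intro j _; ring
    rw [Finset.prod_congr rfl this, Finset.prod_mul_distrib, Finset.prod_const,
      Finset.prod_boole]
    simp
  calc ∑ x ∈ Finset.univ.filter P, (if (∀ j, x j ≠ 0) then (1 : ℤ) else 0)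
      = ∑ x ∈ Finset.univ.filter P, ∑ B ∈ (Finset.univ : Finset (Fin k)).powerset,
          (-1 : ℤ) ^ B.card * (if (∀ j ∈ B, x j = 0) then (1 : ℤ) else 0) := by
        refine Finset.sum_congr rfl (fun x _ => ?_)
        rw [step3 x, step4 x]
    _ = ∑ B ∈ (Finset.univ : Finset (Fin k)).powerset, ∑ x ∈ Finset.univ.filter P,
          (-1 : ℤ) ^ B.card * (if (∀ j ∈ B, x j = 0) then (1 : ℤ) else 0) :=
        Finset.sum_comm
    _ = ∑ B ∈ (Finset.univ : Finset (Fin k)).powerset, (-1 : ℤ) ^ B.card *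
        ((Nat.card {x : Fin k → (Fin n → F) // P x ∧ ∀ j ∈ B, x j = 0}) : ℤ) := by
        refine Finset.sum_congr rfl (fun B _ => ?_)
        rw [← Finset.mul_sum, Finset.sum_boole, Nat.card_eq_fintype_card,
          Fintype.card_subtype, Finset.filter_filter]

lemma card_compl_subtype (B : Finset (Fin k)) :
    (Finset.univ \ B).card = Fintype.card {j : Fin k // j ∉ B} := by
  rw [Fintype.card_subtype]
  congr 1
  ext j
  simp [Finset.mem_sdiff]

lemma aux_binom (n : ℕ) : ((Fintype.card F : ℤ) ^ n - 1) ^ k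
    = ∑ B ∈ (Finset.univ : Finset (Fin k)).powerset, (-1 : ℤ) ^ B.card *
        ((Fintype.card F : ℤ)) ^ (n * Fintype.card {j : Fin k // j ∉ B}) := by
  have h := Finset.prod_add (fun _ : Fin k => (-1 : ℤ))
    (fun _ : Fin k => (Fintype.card F : ℤ) ^ n) Finset.univ
  rw [Finset.prod_const, Finset.card_univ, Fintype.card_fin] at h
  have hl : (-1 + (Fintype.card F : ℤ) ^ n) = ((Fintype.card F : ℤ) ^ n - 1) := by ring
  rw [hl] at h
  rw [h]
  refine Finset.sum_congr rfl (fun B _ => ?_)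
  rw [Finset.prod_const, Finset.prod_const, ← card_compl_subtype, ← pow_mul]

lemma card_compl_add_card (B : Finset (Fin k)) :
    Fintype.card {j : Fin k // j ∉ B} + B.card = k := by
  rw [← card_compl_subtype]
  have h1 : (Finset.univ \ B).card = Finset.univ.card - B.card :=
    Finset.card_sdiff_of_subset (Finset.subset_univ B)
  have h2 : B.card ≤ Finset.univ.card := Finset.card_le_card (Finset.subset_univ B)
  rw [Finset.card_univ, Fintype.card_fin] at h1 h2
  omega

end Count

set_option maxHeartbeats 1000000 in
theorem odd_minimal_length_not_sidorenko
    {F : Type*} [Field F] [Fintype F] {m k : ℕ} (L : Matrix (Fin m) (Fin k) F)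
    (hrank : L.rank = m) (hodd : Odd (minLen L)) :
    ∃ N : ℕ, ∀ n ≥ N,
      (Fintype.card F) ^ (n * m) *
          Nat.card {x : Fin k → (Fin n → F) //
            (∀ j, x j ≠ 0) ∧ ∀ i : Fin m, ∑ j : Fin k, L i j • x j = 0}
        < ((Fintype.card F) ^ n - 1) ^ k := by
  classical
  set q := Fintype.card F with hqdef
  set s := minLen L with hsdef
  have hq2 : 2 ≤ q := Fintype.one_lt_card
  have hs1 : 1 ≤ s := by
    rcases Nat.eq_zero_or_pos s with h | h
    · rw [h] at hodd; simp [Nat.odd_iff] at hodd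
    · exact h
  -- a minimal support vector exists
  have hSne : {c | ∃ v ∈ Submodule.span F (Set.range fun i => L i),
      v ≠ 0 ∧ suppCard v = c}.Nonempty := by
    by_contra h
    rw [Set.not_nonempty_iff_eq_empty] at h
    have h0 : minLen L = 0 := by rw [minLen, h, Nat.sInf_empty]
    omega
  have hmem : minLen L ∈ {c | ∃ v ∈ Submodule.span F (Set.range fun i => L i),
      v ≠ 0 ∧ suppCard v = c} := Nat.sInf_mem hSne
  obtain ⟨v₀, hv₀RS, hv₀0, hv₀s⟩ := hmem
  have hsk : s ≤ k := by
    have h1 : suppCard v₀ ≤ (Finset.univ : Finset (Fin k)).card :=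
      Finset.card_le_card (Finset.filter_subset _ _)
    rw [Finset.card_univ, Fintype.card_fin] at h1
    omega
  have hm : Module.finrank F ↥(RS L) = m := by rw [finrank_RS, hrank]
  -- Singleton bound
  have hL4 : ∀ B : Finset (Fin k), 1 ≤ DD L B → DD L B + s ≤ B.card + 1 := by
    intro B hB
    have h1 := DD_L1 L B hB
    obtain ⟨C, hCB, hCcard⟩ := Finset.exists_subset_card_eq (show s - 1 ≤ B.card by omega)
    have h2 := DD_L2 L hCB
    have hC0 : DD L C = 0 := by
      by_contra h
      have := DD_L1 L C (by omega)
      omega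
    have h3 : (B \ C).card = B.card - (s - 1) := by rw [Finset.card_sdiff_of_subset hCB, hCcard]
    have h4 : C.card ≤ B.card := Finset.card_le_card hCB
    omega
  set GB : Finset (Fin k) → Prop := fun B => 1 ≤ DD L B ∧ DD L B + s = B.card + 1 with hGBdef
  set 𝒢 : Finset (Finset (Fin k)) := Finset.univ.powerset.filter GB with h𝒢def
  have hmem𝒢 : ∀ B, B ∈ 𝒢 ↔ GB B := by
    intro B
    rw [h𝒢def, Finset.mem_filter, Finset.mem_powerset]
    exact ⟨fun h => h.2, fun h => ⟨Finset.subset_univ B, h⟩⟩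
  -- B₀ is good
  set B₀ := Finset.univ.filter (fun j => v₀ j ≠ 0) with hB₀def
  have hB₀card : B₀.card = s := hv₀s
  have hB₀D : 1 ≤ DD L B₀ := by
    have hvmem : v₀ ∈ RS L ⊓ LinearMap.ker (evB B₀) := by
      refine ⟨hv₀RS, mem_ker_evB.2 (fun j hj => ?_)⟩
      by_contra hne
      exact hj (Finset.mem_filter.2 ⟨Finset.mem_univ j, hne⟩)
    by_contra h
    push_neg at h
    have h0 : DD L B₀ = 0 := by omega
    have hbot : RS L ⊓ LinearMap.ker (evB B₀) = ⊥ := Submodule.finrank_eq_zero.1 h0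
    rw [hbot, Submodule.mem_bot] at hvmem
    exact hv₀0 hvmem
  have hB₀G : GB B₀ := by
    have := hL4 B₀ hB₀D
    exact ⟨hB₀D, by omega⟩
  -- the alternating sum over good sets is at most -1
  have hsum𝒢 : ∑ B ∈ 𝒢, (-1 : ℤ) ^ B.card ≤ -1 := by
    have hdown : ∀ U ∈ 𝒢, ∀ V ⊆ U, s ≤ V.card → V ∈ 𝒢 := by
      intro U hU V hVU hVc
      have hg := (hmem𝒢 U).1 hU
      have h2 := DD_L2 L hVU
      have h3 : (U \ V).card = U.card - V.card := Finset.card_sdiff_of_subset hVU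
      have h4 : V.card ≤ U.card := Finset.card_le_card hVU
      have hV1 : 1 ≤ DD L V := by omega
      have h5 := hL4 V hV1
      exact (hmem𝒢 V).2 ⟨hV1, by omega⟩
    have hunion : ∀ U₁ ∈ 𝒢, ∀ U₂ ∈ 𝒢, s ≤ (U₁ ∩ U₂).card + 1 → U₁ ∪ U₂ ∈ 𝒢 := by
      intro U₁ h₁ U₂ h₂ hci
      have g₁ := (hmem𝒢 U₁).1 h₁
      have g₂ := (hmem𝒢 U₂).1 h₂
      have h3 := DD_L3 L U₁ U₂
      have hcui := Finset.card_union_add_card_inter U₁ U₂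
      have h4a : U₁.card ≤ (U₁ ∪ U₂).card := Finset.card_le_card Finset.subset_union_left
      have h4b : (U₁ ∩ U₂).card ≤ U₁.card := Finset.card_le_card Finset.inter_subset_left
      have hDi : DD L (U₁ ∩ U₂) + s ≤ (U₁ ∩ U₂).card + 1 ∨ DD L (U₁ ∩ U₂) = 0 := by
        rcases Nat.eq_zero_or_pos (DD L (U₁ ∩ U₂)) with h | h
        · right; exact h
        · left; exact hL4 _ h
      have hU1 : 1 ≤ DD L (U₁ ∪ U₂) := by rcases hDi with h | h <;> omega
      have h5 := hL4 _ hU1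
      refine (hmem𝒢 _).2 ⟨hU1, ?_⟩
      rcases hDi with h | h <;> omega
    have hmin : ∀ U ∈ 𝒢, s ≤ U.card := by
      intro U hU
      exact DD_L1 L U ((hmem𝒢 U).1 hU).1
    have hne𝒢 : 𝒢.Nonempty := ⟨B₀, (hmem𝒢 B₀).2 hB₀G⟩
    have hcomb := aux_comb_main s hs1 𝒢 hdown hunion hmin hne𝒢
    rw [Odd.neg_one_pow hodd] at hcomb
    linarith
  -- now the counting
  refine ⟨k + 1, fun n hn => ?_⟩
  have hq1 : (1 : ℤ) ≤ (q : ℤ) := by exact_mod_cast Nat.le_of_lt hq2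
  have hcBc : ∀ B : Finset (Fin k), Fintype.card {j : Fin k // j ∉ B} + B.card = k :=
    fun B => card_compl_add_card B
  have hgoodExp : ∀ B : Finset (Fin k), GB B →
      Fintype.card {j : Fin k // j ∉ B} + DD L B = (k - s) + 1 := by
    intro B hg
    have hcb := hcBc B
    have hsB := DD_L1 L B hg.1
    have hg2 := hg.2
    omega
  have hgoodcB : ∀ B : Finset (Fin k), GB B →
      Fintype.card {j : Fin k // j ∉ B} ≤ k - s := by
    intro B hg
    have hcb := hcBc B
    have hsB := DD_L1 L B hg.1
    omega
  have hbadExp : ∀ B : Finset (Fin k), ¬ GB B → 1 ≤ DD L B →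
      Fintype.card {j : Fin k // j ∉ B} + DD L B ≤ k - s
        ∧ Fintype.card {j : Fin k // j ∉ B} ≤ k - s := by
    intro B hnb h1
    have h4 := hL4 B h1
    have hsB := DD_L1 L B h1
    have hcb := hcBc B
    have hne : DD L B + s ≠ B.card + 1 := by
      intro hc
      rw [hGBdef] at hnb
      exact hnb ⟨h1, hc⟩
    constructor <;> omega
  have hklt : k < n := lt_of_lt_of_le (Nat.lt_succ_self k) hn
  have hmain : ((q : ℤ)) ^ (n * m) * ((Nat.card {x : Fin k → (Fin n → F) //
        (∀ j, x j ≠ 0) ∧ ∀ i : Fin m, ∑ j : Fin k, L i j • x j = 0}) : ℤ)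
      = ∑ B ∈ (Finset.univ : Finset (Fin k)).powerset, (-1 : ℤ) ^ B.card *
          (q : ℤ) ^ (n * (Fintype.card {j : Fin k // j ∉ B} + DD L B)) := by
    rw [aux_incl_excl L n, Finset.mul_sum]
    refine Finset.sum_congr rfl (fun B _ => ?_)
    rw [card_solB L n B]
    have hexp : m + dk L B = Fintype.card {j : Fin k // j ∉ B} + DD L B := by
      have h1 := delRank_add_DD L B
      rw [hm] at h1
      have h2 := delRank_add_dk L B
      omega
    have hexp2 : n * (Fintype.card {j : Fin k // j ∉ B} + DD L B) = n * m + n * dk L B := by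
      rw [← hexp]; ring
    rw [hexp2]
    push_cast
    rw [pow_add]
    ring
  have hbin : ((q : ℤ) ^ n - 1) ^ k
      = ∑ B ∈ (Finset.univ : Finset (Fin k)).powerset, (-1 : ℤ) ^ B.card *
          (q : ℤ) ^ (n * Fintype.card {j : Fin k // j ∉ B}) := aux_binom (F := F) (k := k) n
  obtain ⟨M, hMdef⟩ : ∃ M : ℤ, M = (q : ℤ) ^ (n * (k - s)) := ⟨_, rfl⟩
  have hMpos : 0 < M := by rw [hMdef]; positivity
  obtain ⟨T, hTdef⟩ : ∃ T : Finset (Fin k) → ℤ, T = fun B => (-1 : ℤ) ^ B.card *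
      ((q : ℤ) ^ (n * (Fintype.card {j : Fin k // j ∉ B} + DD L B))
        - (q : ℤ) ^ (n * Fintype.card {j : Fin k // j ∉ B})) := ⟨_, rfl⟩
  have hdiff : ((q : ℤ)) ^ (n * m) * ((Nat.card {x : Fin k → (Fin n → F) //
        (∀ j, x j ≠ 0) ∧ ∀ i : Fin m, ∑ j : Fin k, L i j • x j = 0}) : ℤ)
        - ((q : ℤ) ^ n - 1) ^ k
      = ∑ B ∈ (Finset.univ : Finset (Fin k)).powerset, T B := by
    rw [hmain, hbin, ← Finset.sum_sub_distrib]
    exact Finset.sum_congr rfl (fun B _ => by rw [hTdef]; ring)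
  have hsplit := Finset.sum_filter_add_sum_filter_not
    (Finset.univ : Finset (Fin k)).powerset GB T
  -- bound on the good part
  have hgood : ∑ B ∈ 𝒢, T B
      ≤ -((q : ℤ) ^ (n * (k - s) + n)) + (𝒢.card : ℤ) * M := by
    have h1 : ∀ B ∈ 𝒢, T B = (-1 : ℤ) ^ B.card * (q : ℤ) ^ (n * (k - s) + n)
        - (-1 : ℤ) ^ B.card * (q : ℤ) ^ (n * Fintype.card {j : Fin k // j ∉ B}) := by
      intro B hB
      have hg := (hmem𝒢 B).1 hB
      have he : n * (Fintype.card {j : Fin k // j ∉ B} + DD L B) = n * (k - s) + n := by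
        rw [hgoodExp B hg]; ring
      rw [hTdef]
      dsimp only
      rw [he]
      ring
    rw [Finset.sum_congr rfl h1, Finset.sum_sub_distrib, ← Finset.sum_mul]
    have h2 : (∑ B ∈ 𝒢, (-1 : ℤ) ^ B.card) * (q : ℤ) ^ (n * (k - s) + n)
        ≤ -1 * (q : ℤ) ^ (n * (k - s) + n) :=
      mul_le_mul_of_nonneg_right hsum𝒢 (by positivity)
    have h3 : - ∑ B ∈ 𝒢, (-1 : ℤ) ^ B.card * (q : ℤ) ^ (n * Fintype.card {j : Fin k // j ∉ B})
        ≤ (𝒢.card : ℤ) * M := by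
      rw [← Finset.sum_neg_distrib]
      calc ∑ B ∈ 𝒢, -((-1 : ℤ) ^ B.card * (q : ℤ) ^ (n * Fintype.card {j : Fin k // j ∉ B}))
          ≤ ∑ _B ∈ 𝒢, M := by
            refine Finset.sum_le_sum (fun B hB => ?_)
            have hg := (hmem𝒢 B).1 hB
            have hXM : (q : ℤ) ^ (n * Fintype.card {j : Fin k // j ∉ B}) ≤ M := by
              rw [hMdef]
              exact pow_le_pow_right₀ hq1 (Nat.mul_le_mul_left n (hgoodcB B hg))
            have hX0 : (0 : ℤ) ≤ (q : ℤ) ^ (n * Fintype.card {j : Fin k // j ∉ B}) := by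
              positivity
            rcases Nat.even_or_odd B.card with hev | hev
            · rw [hev.neg_one_pow]; linarith
            · rw [hev.neg_one_pow]; linarith
        _ = (𝒢.card : ℤ) * M := by rw [Finset.sum_const, nsmul_eq_mul]
    linarith
  -- bound on the bad part
  have hbad : ∑ B ∈ (Finset.univ : Finset (Fin k)).powerset.filter (fun B => ¬ GB B), T B
      ≤ (((Finset.univ : Finset (Fin k)).powerset.filter (fun B => ¬ GB B)).card : ℤ) * M := by
    calc ∑ B ∈ (Finset.univ : Finset (Fin k)).powerset.filter (fun B => ¬ GB B), T B
        ≤ ∑ _B ∈ (Finset.univ : Finset (Fin k)).powerset.filter (fun B => ¬ GB B), M := by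
          refine Finset.sum_le_sum (fun B hB => ?_)
          have hnb := (Finset.mem_filter.1 hB).2
          rcases Nat.eq_zero_or_pos (DD L B) with h0 | h1
          · rw [hTdef]
            dsimp only
            rw [h0, Nat.add_zero, sub_self, mul_zero]
            linarith
          · have hbe := hbadExp B hnb h1
            have ha : (q : ℤ) ^ (n * (Fintype.card {j : Fin k // j ∉ B} + DD L B)) ≤ M := by
              rw [hMdef]
              exact pow_le_pow_right₀ hq1 (Nat.mul_le_mul_left n hbe.1)
            have hb : (q : ℤ) ^ (n * Fintype.card {j : Fin k // j ∉ B}) ≤ M := by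
              rw [hMdef]
              exact pow_le_pow_right₀ hq1 (Nat.mul_le_mul_left n hbe.2)
            have ha0 : (0 : ℤ) ≤ (q : ℤ) ^ (n * (Fintype.card {j : Fin k // j ∉ B} + DD L B)) := by
              positivity
            have hb0 : (0 : ℤ) ≤ (q : ℤ) ^ (n * Fintype.card {j : Fin k // j ∉ B}) := by
              positivity
            rw [hTdef]
            dsimp only
            rcases Nat.even_or_odd B.card with hev | hev
            · rw [hev.neg_one_pow]; linarith
            · rw [hev.neg_one_pow]; linarith
      _ = _ := by rw [Finset.sum_const, nsmul_eq_mul]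
  have hcards : 𝒢.card + ((Finset.univ : Finset (Fin k)).powerset.filter (fun B => ¬ GB B)).card
      = 2 ^ k := by
    rw [h𝒢def, Finset.card_filter_add_card_filter_not, Finset.card_powerset,
      Finset.card_univ, Fintype.card_fin]
  have htot : ∑ B ∈ (Finset.univ : Finset (Fin k)).powerset, T B < 0 := by
    have hqE : (q : ℤ) ^ (n * (k - s) + n) = M * (q : ℤ) ^ n := by
      rw [hMdef, pow_add]
    have h2q : (2 : ℤ) ^ k < (q : ℤ) ^ n := by
      calc (2 : ℤ) ^ k < 2 ^ n := by
            refine pow_lt_pow_right₀ (by norm_num) hklt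
        _ ≤ (q : ℤ) ^ n := by
            refine pow_le_pow_left₀ (by norm_num) (by exact_mod_cast hq2) n
    have hlt : ((2 : ℕ) ^ k : ℤ) * M < (q : ℤ) ^ (n * (k - s) + n) := by
      rw [hqE]
      push_cast
      nlinarith
    rw [← hsplit]
    have hG : 𝒢 = (Finset.univ : Finset (Fin k)).powerset.filter GB := h𝒢def
    have hsum2 : ((𝒢.card : ℤ)
        + (((Finset.univ : Finset (Fin k)).powerset.filter (fun B => ¬ GB B)).card : ℤ))
        = ((2 : ℕ) ^ k : ℤ) := by exact_mod_cast hcards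
    rw [← hG]
    have hmul : (𝒢.card : ℤ) * M
        + (((Finset.univ : Finset (Fin k)).powerset.filter (fun B => ¬ GB B)).card : ℤ) * M
        = ((2 : ℕ) ^ k : ℤ) * M := by rw [← add_mul, hsum2]
    linarith [hgood, hbad, hlt]
  -- convert to ℕ
  have hZ : (q : ℤ) ^ (n * m) * ((Nat.card {x : Fin k → (Fin n → F) //
        (∀ j, x j ≠ 0) ∧ ∀ i : Fin m, ∑ j : Fin k, L i j • x j = 0}) : ℤ)
      < ((q : ℤ) ^ n - 1) ^ k := by linarith [hdiff, htot]
  have hqn1 : 1 ≤ q ^ n := Nat.one_le_pow n q (Nat.lt_of_lt_of_le (by norm_num) hq2)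
  zify [hqn1]
  push_cast
  exact_mod_cast hZ
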